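/- Let n = d·e = d'·e' be squarefree with gcd(d,e) = 1 = gcd(d',e'), and let k have multiplicative order d modulo e and k' have multiplicative order d' modulo e'. Then the groups G(d,e,k) and G(d',e',k') are isomorphic if and only if d = d', e = e', and k and k' generate the same cyclic subgroup of the unit group U(e) of Z/eZ. -/

import Mathlib

lemma pow_mod_of_pow_eq_one {M : Type*} [Monoid M] {z : M} {dd : ℕ} (h : z ^ dd = 1) (x : ℕ) :
    z ^ (x % dd) = z ^ x := by
  conv_rhs => rw [← Nat.div_add_mod x dd]
  rw [pow_add, pow_mul, h, one_pow, one_mul]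

section grp
variable {G : Type*} [Group G] {σ τ : G} {k d e : ℕ}

lemma conj_pow_base (hrel : τ * σ * τ⁻¹ = σ ^ k) (m : ℕ) :
    τ * σ ^ m * τ⁻¹ = σ ^ (k * m) := by
  rw [← conj_pow, hrel, ← pow_mul]

lemma conj_pow_lemma (hrel : τ * σ * τ⁻¹ = σ ^ k) (m a : ℕ) :
    τ ^ m * σ ^ a * (τ ^ m)⁻¹ = σ ^ (k ^ m * a) := by
  induction m with
  | zero => simp
  | succ i ih =>
    calc τ ^ (i+1) * σ ^ a * (τ ^ (i+1))⁻¹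
        = τ * (τ ^ i * σ ^ a * (τ ^ i)⁻¹) * τ⁻¹ := by
          rw [pow_succ']; group
      _ = σ ^ (k ^ (i+1) * a) := by
          rw [ih, conj_pow_base hrel, pow_succ']; ring_nf

lemma swap_pow (hrel : τ * σ * τ⁻¹ = σ ^ k) (m a : ℕ) :
    τ ^ m * σ ^ a = σ ^ (k ^ m * a) * τ ^ m := by
  rw [← conj_pow_lemma hrel m a]; group

lemma pow_inv_form {g : G} {m : ℕ} (hm : m ≠ 0) (h : g ^ m = 1) (c : ℕ) :
    (g ^ c)⁻¹ = g ^ (c * (m - 1)) := by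
  rw [inv_eq_iff_mul_eq_one, ← pow_add]
  have hc : c + c * (m - 1) = m * c := by
    obtain ⟨m', rfl⟩ : ∃ m', m = m' + 1 := ⟨m - 1, by omega⟩
    simp [Nat.add_sub_cancel]; ring
  rw [hc, pow_mul, h, one_pow]

lemma normal_form (hd : d ≠ 0) (he : e ≠ 0) (hσ : orderOf σ = e) (hτ : orderOf τ = d)
    (hrel : τ * σ * τ⁻¹ = σ ^ k) (hgen : Subgroup.closure {σ, τ} = ⊤) (x : G) :
    ∃ a c : ℕ, x = σ ^ a * τ ^ c := by
  have hτd : τ ^ d = 1 := by rw [← hτ]; exact pow_orderOf_eq_one τ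
  have hσe : σ ^ e = 1 := by rw [← hσ]; exact pow_orderOf_eq_one σ
  have key : ∀ y ∈ Subgroup.closure ({σ, τ} : Set G), ∃ a c : ℕ, y = σ ^ a * τ ^ c := by
    intro y hy
    induction hy using Subgroup.closure_induction'' with
    | one => exact ⟨0, 0, by simp⟩
    | mem z hz =>
      rcases hz with rfl | rfl
      · exact ⟨1, 0, by simp⟩
      · exact ⟨0, 1, by simp⟩
    | inv_mem z hz =>
      rcases hz with rfl | rfl
      · exact ⟨1 * (e - 1), 0, by rw [← pow_inv_form he hσe 1, pow_one, pow_zero, mul_one]⟩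
      · exact ⟨0, 1 * (d - 1), by rw [← pow_inv_form hd hτd 1, pow_one, pow_zero, one_mul]⟩
    | mul z w hz hw ihz ihw =>
      obtain ⟨a, c, rfl⟩ := ihz
      obtain ⟨a', c', rfl⟩ := ihw
      refine ⟨a + k ^ c * a', c + c', ?_⟩
      calc σ ^ a * τ ^ c * (σ ^ a' * τ ^ c')
          = σ ^ a * (τ ^ c * σ ^ a') * τ ^ c' := by group
        _ = σ ^ a * (σ ^ (k ^ c * a') * τ ^ c) * τ ^ c' := by rw [swap_pow hrel]
        _ = σ ^ (a + k ^ c * a') * τ ^ (c + c') := by rw [pow_add, pow_add]; group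
  exact key x (by rw [hgen]; trivial)
end grp

section grp2
variable {G : Type*} [Group G] {σ τ : G} {k d e : ℕ}

lemma sep_lemma (hcop : Nat.Coprime d e) (hσ : orderOf σ = e) (hτ : orderOf τ = d)
    {a c : ℕ} (h : σ ^ a * τ ^ c = 1) : σ ^ a = 1 ∧ τ ^ c = 1 := by
  have h1 : σ ^ a = (τ ^ c)⁻¹ := by rw [eq_inv_iff_mul_eq_one]; exact h
  have he' : (σ ^ a) ^ e = 1 := by
    rw [← pow_mul, mul_comm, pow_mul, ← hσ, pow_orderOf_eq_one, one_pow]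
  have hτd : τ ^ d = 1 := hτ ▸ pow_orderOf_eq_one τ
  have hd' : (σ ^ a) ^ d = 1 := by
    rw [h1, inv_pow, ← pow_mul, mul_comm, pow_mul, hτd, one_pow, inv_one]
  have : orderOf (σ ^ a) ∣ Nat.gcd d e := Nat.dvd_gcd (orderOf_dvd_of_pow_eq_one hd')
    (orderOf_dvd_of_pow_eq_one he')
  rw [hcop] at this
  have h2 : σ ^ a = 1 := orderOf_eq_one_iff.mp (Nat.eq_one_of_dvd_one this)
  refine ⟨h2, ?_⟩
  rw [h2, one_mul] at h; exact h

lemma pow_formula (hrel : τ * σ * τ⁻¹ = σ ^ k) (a c m : ℕ) :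
    (σ ^ a * τ ^ c) ^ m = σ ^ (a * ∑ j ∈ Finset.range m, k ^ (c * j)) * τ ^ (c * m) := by
  induction m with
  | zero => simp
  | succ i ih =>
    rw [pow_succ, ih]
    calc σ ^ (a * ∑ j ∈ Finset.range i, k ^ (c * j)) * τ ^ (c * i) * (σ ^ a * τ ^ c)
        = σ ^ (a * ∑ j ∈ Finset.range i, k ^ (c * j)) * (τ ^ (c * i) * σ ^ a) * τ ^ c := by
          group
      _ = σ ^ (a * ∑ j ∈ Finset.range i, k ^ (c * j)) * (σ ^ (k ^ (c * i) * a) * τ ^ (c * i)) * τ ^ c := by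
          rw [swap_pow hrel]
      _ = σ ^ (a * ∑ j ∈ Finset.range (i + 1), k ^ (c * j)) * τ ^ (c * (i + 1)) := by
          rw [Finset.sum_range_succ, Nat.mul_add, pow_add, Nat.mul_add, Nat.mul_one, pow_add,
            mul_comm (k ^ (c * i)) a]
          group

lemma mem_powers_of_pow_eq_one (hd : d ≠ 0) (he : e ≠ 0) (hcop : Nat.Coprime d e) (hσ : orderOf σ = e)
    (hτ : orderOf τ = d) (hrel : τ * σ * τ⁻¹ = σ ^ k) (hgen : Subgroup.closure {σ, τ} = ⊤)
    {m : ℕ} (hm : Nat.Coprime d m) {x : G} (hx : x ^ m = 1) :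
    x ∈ Submonoid.powers σ := by
  obtain ⟨a, c, rfl⟩ := normal_form hd he hσ hτ hrel hgen x
  rw [pow_formula hrel] at hx
  have h2 := (sep_lemma (d := d) (e := e) hcop hσ hτ hx).2
  have hdc : d ∣ c := by
    have : d ∣ c * m := hτ ▸ orderOf_dvd_of_pow_eq_one h2
    exact hm.dvd_of_dvd_mul_right this
  have : τ ^ c = 1 := by
    obtain ⟨t, rfl⟩ := hdc
    rw [pow_mul, ← hτ, pow_orderOf_eq_one, one_pow]
  rw [this, mul_one]
  exact ⟨a, rfl⟩

lemma finite_of_presentation (hd : d ≠ 0) (he : e ≠ 0) (hσ : orderOf σ = e)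
    (hτ : orderOf τ = d) (hrel : τ * σ * τ⁻¹ = σ ^ k)
    (hgen : Subgroup.closure {σ, τ} = ⊤) : Finite G := by
  have hσe : σ ^ e = 1 := hσ ▸ pow_orderOf_eq_one σ
  have hτd : τ ^ d = 1 := hτ ▸ pow_orderOf_eq_one τ
  refine Finite.of_surjective (fun y : Fin e × Fin d => σ ^ (y.1 : ℕ) * τ ^ (y.2 : ℕ)) ?_
  intro x
  obtain ⟨a, c, rfl⟩ := normal_form hd he hσ hτ hrel hgen x
  refine ⟨(⟨a % e, Nat.mod_lt _ (Nat.pos_of_ne_zero he)⟩, ⟨c % d, Nat.mod_lt _ (Nat.pos_of_ne_zero hd)⟩), ?_⟩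
  simp only
  rw [pow_mod_of_pow_eq_one hσe, pow_mod_of_pow_eq_one hτd]

end grp2

section counting
variable {G : Type*} [Group G] {σ τ : G} {k d e : ℕ}

/-- Upper bound: if `p ∣ e` then there are at most `p` solutions of `x ^ p = 1`. -/
lemma card_roots_le (hd : d ≠ 0) (he : e ≠ 0) (hcop : Nat.Coprime d e)
    (hσ : orderOf σ = e) (hτ : orderOf τ = d) (hrel : τ * σ * τ⁻¹ = σ ^ k)
    (hgen : Subgroup.closure {σ, τ} = ⊤) {p : ℕ} (hp : p.Prime) (hpe : p ∣ e) :
    Nat.card {x : G // x ^ p = 1} ≤ p := by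
  classical
  have hcop' : Nat.Coprime d p := hcop.coprime_dvd_right hpe
  set m := e / p with hm
  have hpm : p * m = e := Nat.mul_div_cancel' hpe
  have hm0 : m ≠ 0 := by
    intro h; rw [h, Nat.mul_zero] at hpm; exact he hpm.symm
  -- each solution lies in the powers of σ
  have hmem : ∀ x : {x : G // x ^ p = 1}, ∃ a : ℕ, σ ^ a = (x : G) := fun x =>
    mem_powers_of_pow_eq_one hd he hcop hσ hτ hrel hgen hcop' x.2
  -- the exponent map into Fin p
  have key : ∀ x : {x : G // x ^ p = 1}, ∀ a : ℕ, σ ^ a = (x : G) →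
      e ∣ a * p := by
    intro x a ha
    have : (σ ^ a) ^ p = 1 := by rw [ha]; exact x.2
    rw [← pow_mul] at this
    exact hσ ▸ orderOf_dvd_of_pow_eq_one this
  let F : {x : G // x ^ p = 1} → Fin p := fun x =>
    ⟨(Classical.choose (hmem x)) % e / m, by
      have hlt : (Classical.choose (hmem x)) % e < e := Nat.mod_lt _ (Nat.pos_of_ne_zero he)
      have hdvd : e ∣ (Classical.choose (hmem x)) * p := key x _ (Classical.choose_spec (hmem x))
      have hdvd2 : e ∣ ((Classical.choose (hmem x)) % e) * p := by
        have h1 : (Classical.choose (hmem x)) % e * p ≡ (Classical.choose (hmem x)) * p [MOD e] :=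
          Nat.ModEq.mul_right p (Nat.mod_modEq _ e)
        exact (Nat.modEq_zero_iff_dvd.mp (h1.trans (Nat.modEq_zero_iff_dvd.mpr hdvd)))
      have hmd : m ∣ (Classical.choose (hmem x)) % e := by
        have : p * m ∣ p * ((Classical.choose (hmem x)) % e) := by
          rw [hpm]; rwa [Nat.mul_comm] at hdvd2
        exact (Nat.mul_dvd_mul_iff_left hp.pos).mp this
      rw [Nat.div_lt_iff_lt_mul (Nat.pos_of_ne_zero hm0), hpm]
      exact hlt⟩
  have hσe : σ ^ e = 1 := hσ ▸ pow_orderOf_eq_one σ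
  have hFinj : Function.Injective F := by
    intro x y hxy
    have hax := Classical.choose_spec (hmem x)
    have hay := Classical.choose_spec (hmem y)
    set ax := Classical.choose (hmem x)
    set ay := Classical.choose (hmem y)
    have hmx : m ∣ ax % e := by
      have hdvd2 : e ∣ (ax % e) * p := by
        have h1 : ax % e * p ≡ ax * p [MOD e] := Nat.ModEq.mul_right p (Nat.mod_modEq _ e)
        exact (Nat.modEq_zero_iff_dvd.mp (h1.trans (Nat.modEq_zero_iff_dvd.mpr (key x _ hax))))
      have : p * m ∣ p * (ax % e) := by rw [hpm]; rwa [Nat.mul_comm] at hdvd2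
      exact (Nat.mul_dvd_mul_iff_left hp.pos).mp this
    have hmy : m ∣ ay % e := by
      have hdvd2 : e ∣ (ay % e) * p := by
        have h1 : ay % e * p ≡ ay * p [MOD e] := Nat.ModEq.mul_right p (Nat.mod_modEq _ e)
        exact (Nat.modEq_zero_iff_dvd.mp (h1.trans (Nat.modEq_zero_iff_dvd.mpr (key y _ hay))))
      have : p * m ∣ p * (ay % e) := by rw [hpm]; rwa [Nat.mul_comm] at hdvd2
      exact (Nat.mul_dvd_mul_iff_left hp.pos).mp this
    have hval : ax % e = ay % e := by
      have h1 : ax % e / m = ay % e / m := congrArg Fin.val hxy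
      calc ax % e = m * (ax % e / m) := (Nat.mul_div_cancel' hmx).symm
        _ = m * (ay % e / m) := by rw [h1]
        _ = ay % e := Nat.mul_div_cancel' hmy
    have : (x : G) = (y : G) := by
      rw [← hax, ← hay, ← pow_mod_of_pow_eq_one hσe ax, ← pow_mod_of_pow_eq_one hσe ay, hval]
    exact Subtype.ext this
  calc Nat.card {x : G // x ^ p = 1} ≤ Nat.card (Fin p) := Nat.card_le_card_of_injective F hFinj
    _ = p := by simp

end counting

section counting2
variable {G : Type*} [Group G] {σ τ : G} {k d e : ℕ}

/-- Lower bound: if `p ∣ d` then there are at least `p + 1` solutions of `x ^ p = 1`. -/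
lemma card_roots_ge (hd : d ≠ 0) (he : e ≠ 0) (hcop : Nat.Coprime d e)
    (hσ : orderOf σ = e) (hτ : orderOf τ = d) (hrel : τ * σ * τ⁻¹ = σ ^ k)
    (hgen : Subgroup.closure {σ, τ} = ⊤) (hord : orderOf (k : ZMod e) = d)
    {p : ℕ} (hp : p.Prime) (hpd : p ∣ d) :
    p + 1 ≤ Nat.card {x : G // x ^ p = 1} := by
  classical
  haveI : Finite G := finite_of_presentation hd he hσ hτ hrel hgen
  haveI : NeZero e := ⟨he⟩
  have hτd : τ ^ d = 1 := hτ ▸ pow_orderOf_eq_one τ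
  have hd2 : 2 ≤ d := le_trans hp.two_le (Nat.le_of_dvd (Nat.pos_of_ne_zero hd) hpd)
  have hke : (k : ZMod e) ^ d = 1 := hord ▸ pow_orderOf_eq_one _
  set c := d / p with hcdef
  have hc : c * p = d := Nat.div_mul_cancel hpd
  have hc0 : c ≠ 0 := by
    intro h; rw [h, Nat.zero_mul] at hc; exact hd hc.symm
  have hcd : c < d := Nat.div_lt_self (Nat.pos_of_ne_zero hd) hp.one_lt
  set Sz : ZMod e := ∑ j ∈ Finset.range p, ((k : ZMod e) ^ c) ^ j with hSzdef
  have hSz_mul : Sz * ((k : ZMod e) ^ c - 1) = 0 := by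
    rw [hSzdef, geom_sum_mul, ← pow_mul, hc, hke, sub_self]
  have hSz_nonunit : ¬ IsUnit Sz := by
    intro h
    have h0 : (k : ZMod e) ^ c - 1 = 0 := h.mul_right_eq_zero.mp hSz_mul
    have h1 : (k : ZMod e) ^ c = 1 := by rwa [sub_eq_zero] at h0
    have : d ∣ c := hord ▸ orderOf_dvd_of_pow_eq_one h1
    exact absurd (Nat.le_of_dvd (Nat.pos_of_ne_zero hc0) this) (not_le.mpr hcd)
  -- e ≠ 1
  have he1 : e ≠ 1 := by
    intro h1
    haveI : Subsingleton (ZMod e) := by rw [h1]; infer_instance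
    have : (k : ZMod e) = 1 := Subsingleton.elim _ _
    rw [this, orderOf_one] at hord
    omega
  set g := Nat.gcd Sz.val e with hgdef
  have hgcop : ¬ Nat.Coprime Sz.val e := by
    intro hco
    exact hSz_nonunit (ZMod.natCast_zmod_val Sz ▸ (ZMod.isUnit_iff_coprime Sz.val e).mpr hco)
  have hg0 : g ≠ 0 := fun h => he (Nat.eq_zero_of_gcd_eq_zero_right h)
  have hg1 : g ≠ 1 := fun h => hgcop (by rwa [Nat.Coprime, ← hgdef])
  have hg2 : 2 ≤ g := by omega
  have hge : g ∣ e := Nat.gcd_dvd_right _ _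
  have hgs : g ∣ Sz.val := Nat.gcd_dvd_left _ _
  set a₀ := e / g with ha₀def
  have ha₀0 : a₀ ≠ 0 := by
    have := Nat.div_pos (Nat.le_of_dvd (Nat.pos_of_ne_zero he) hge) (Nat.pos_of_ne_zero hg0)
    omega
  have ha₀e : a₀ < e := Nat.div_lt_self (Nat.pos_of_ne_zero he) hg2
  set Snat := ∑ j ∈ Finset.range p, k ^ (c * j) with hSnatdef
  have hcast : ((Snat : ℕ) : ZMod e) = Sz := by
    rw [hSnatdef, hSzdef]
    push_cast
    exact Finset.sum_congr rfl fun j _ => by rw [pow_mul]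
  have hdvd : e ∣ a₀ * Snat := by
    have h1 : Snat ≡ Sz.val [MOD e] := by
      have hv := ZMod.val_natCast (n := e) Snat
      rw [hcast] at hv
      show Snat % e = Sz.val % e
      rw [← hv, Nat.mod_eq_of_lt (ZMod.val_lt Sz)]
    have h2 : e ∣ a₀ * Sz.val := by
      obtain ⟨t, ht⟩ := hgs
      rw [ht, ← Nat.mul_assoc, Nat.div_mul_cancel hge]
      exact Dvd.intro t rfl
    exact (Nat.modEq_zero_iff_dvd.mp (((h1.mul_left a₀).trans (Nat.modEq_zero_iff_dvd.mpr h2))))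
  set x₀ := σ ^ a₀ * τ ^ c with hx₀def
  have hx₀ : x₀ ^ p = 1 := by
    rw [hx₀def, pow_formula hrel, ← hSnatdef]
    have h1 : σ ^ (a₀ * Snat) = 1 := orderOf_dvd_iff_pow_eq_one.mp (hσ ▸ hdvd)
    have h2 : τ ^ (c * p) = 1 := by rw [hc]; exact hτd
    rw [h1, h2, one_mul]
  -- the p + 1 elements
  have hmemt : ∀ i : ℕ, (τ ^ (i * c)) ^ p = 1 := by
    intro i
    rw [← pow_mul, Nat.mul_assoc, hc, Nat.mul_comm, pow_mul, hτd, one_pow]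
  let F : Fin (p + 1) → {x : G // x ^ p = 1} := fun i =>
    if h : (i : ℕ) < p then ⟨τ ^ ((i : ℕ) * c), hmemt _⟩ else ⟨x₀, hx₀⟩
  have hne : ∀ i : ℕ, i < p → τ ^ (i * c) ≠ x₀ := by
    intro i _ hcon
    have h1 : σ ^ a₀ * τ ^ (c + i * c * (d - 1)) = 1 := by
      calc σ ^ a₀ * τ ^ (c + i * c * (d - 1))
          = (σ ^ a₀ * τ ^ c) * τ ^ (i * c * (d - 1)) := by rw [pow_add, mul_assoc]; group
        _ = τ ^ (i * c) * τ ^ (i * c * (d - 1)) := by rw [← hx₀def, ← hcon]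
        _ = τ ^ (i * c) * (τ ^ (i * c))⁻¹ := by rw [pow_inv_form hd hτd]
        _ = 1 := mul_inv_cancel _
    have := (sep_lemma hcop hσ hτ h1).1
    have : e ∣ a₀ := hσ ▸ orderOf_dvd_of_pow_eq_one this
    have := Nat.le_of_dvd (Nat.pos_of_ne_zero ha₀0) this
    omega
  have hinj : Function.Injective F := by
    intro i j hij
    by_cases hi : (i : ℕ) < p <;> by_cases hj : (j : ℕ) < p
    · simp only [F, dif_pos hi, dif_pos hj, Subtype.mk_eq_mk] at hij
      have h1 : (i : ℕ) * c ≡ (j : ℕ) * c [MOD d] := by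
        rw [← hτ]; exact pow_eq_pow_iff_modEq.mp hij
      have hic : (i : ℕ) * c < d := by
        calc (i : ℕ) * c < p * c := (Nat.mul_lt_mul_right (Nat.pos_of_ne_zero hc0)).mpr hi
          _ = d := by rw [Nat.mul_comm]; exact hc
      have hjc : (j : ℕ) * c < d := by
        calc (j : ℕ) * c < p * c := (Nat.mul_lt_mul_right (Nat.pos_of_ne_zero hc0)).mpr hj
          _ = d := by rw [Nat.mul_comm]; exact hc
      have : (i : ℕ) * c = (j : ℕ) * c := by
        unfold Nat.ModEq at h1
        rwa [Nat.mod_eq_of_lt hic, Nat.mod_eq_of_lt hjc] at h1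
      have := Nat.eq_of_mul_eq_mul_right (Nat.pos_of_ne_zero hc0) this
      exact Fin.ext this
    · simp only [F, dif_pos hi, dif_neg hj, Subtype.mk_eq_mk] at hij
      exact absurd hij (hne _ hi)
    · simp only [F, dif_neg hi, dif_pos hj, Subtype.mk_eq_mk] at hij
      exact absurd hij.symm (hne _ hj)
    · exact Fin.ext (by omega)
  calc p + 1 = Nat.card (Fin (p + 1)) := by simp
    _ ≤ Nat.card {x : G // x ^ p = 1} := Nat.card_le_card_of_injective F hinj

end counting2

section model
variable (d e k : ℕ)

/-- the hom `ZMod d → (ZMod e)ˣ` sending `1` to the unit `k`. -/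
noncomputable def χmap (hd : d ≠ 0) (hk : (k : ZMod e) ^ d = 1) :
    Multiplicative (ZMod d) →* (ZMod e)ˣ := by
  haveI : NeZero d := ⟨hd⟩
  have hu : IsUnit (k : ZMod e) := IsUnit.of_pow_eq_one hk hd
  refine { toFun := fun c => hu.unit ^ (Multiplicative.toAdd c).val,
           map_one' := ?_, map_mul' := ?_ }
  · show hu.unit ^ (0 : ZMod d).val = 1
    rw [ZMod.val_zero, pow_zero]
  · intro a b
    show hu.unit ^ ((Multiplicative.toAdd a) + (Multiplicative.toAdd b)).val = _
    have hud : hu.unit ^ d = 1 := by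
      ext
      push_cast [hu.unit_spec]
      exact hk
    rw [ZMod.val_add, pow_mod_of_pow_eq_one hud, pow_add]

def addAutToMulAut (A : Type*) [AddGroup A] : Multiplicative (AddAut A) →* MulAut (Multiplicative A) where
  toFun f := AddEquiv.toMultiplicative (Multiplicative.toAdd f)
  map_one' := by ext; rfl
  map_mul' f g := by ext; rfl

noncomputable def φmap (hd : d ≠ 0) (hk : (k : ZMod e) ^ d = 1) :
    Multiplicative (ZMod d) →* MulAut (Multiplicative (ZMod e)) :=
  (addAutToMulAut (ZMod e)).comp
    ((DistribMulAction.toAddAut (ZMod e)ˣ (ZMod e)).comp (χmap d e k hd hk))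

lemma φmap_apply (hd : d ≠ 0) (hk : (k : ZMod e) ^ d = 1) (c : Multiplicative (ZMod d))
    (a : Multiplicative (ZMod e)) :
    Multiplicative.toAdd (φmap d e k hd hk c a) =
      (k : ZMod e) ^ (Multiplicative.toAdd c).val * Multiplicative.toAdd a := by
  haveI : NeZero d := ⟨hd⟩
  show ((IsUnit.of_pow_eq_one hk hd).unit ^ (Multiplicative.toAdd c).val : (ZMod e)ˣ) •
      Multiplicative.toAdd a = _
  rw [Units.smul_def, smul_eq_mul]
  push_cast [(IsUnit.of_pow_eq_one hk hd).unit_spec]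
  rfl
end model


section model2
variable (d e k : ℕ)

noncomputable abbrev Nmodel (hd : d ≠ 0) (hk : (k : ZMod e) ^ d = 1) :=
  SemidirectProduct (Multiplicative (ZMod e)) (Multiplicative (ZMod d)) (φmap d e k hd hk)

lemma Nmodel_card (hd : d ≠ 0) (hk : (k : ZMod e) ^ d = 1) :
    Nat.card (Nmodel d e k hd hk) = e * d := by
  have : Nmodel d e k hd hk ≃ (ZMod e) × (ZMod d) :=
    { toFun := fun x => (Multiplicative.toAdd x.left, Multiplicative.toAdd x.right)
      invFun := fun y => ⟨Multiplicative.ofAdd y.1, Multiplicative.ofAdd y.2⟩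
      left_inv := fun x => by cases x; rfl
      right_inv := fun y => rfl }
  rw [Nat.card_congr this, Nat.card_prod, Nat.card_zmod, Nat.card_zmod]

lemma Nmodel_finite (hd : d ≠ 0) (he : e ≠ 0) (hk : (k : ZMod e) ^ d = 1) :
    Finite (Nmodel d e k hd hk) :=
  Nat.finite_of_card_ne_zero (by rw [Nmodel_card]; exact Nat.mul_ne_zero he hd)

end model2

section modelIso
variable {G : Type*} [Group G] {σ τ : G} {k d e : ℕ}

/-- Any group realizing the presentation `G(d,e,k)` is isomorphic to the model. -/
lemma model_iso (hd : d ≠ 0) (he : e ≠ 0) (hcop : Nat.Coprime d e)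
    (hk : (k : ZMod e) ^ d = 1)
    (hσ : orderOf σ = e) (hτ : orderOf τ = d) (hrel : τ * σ * τ⁻¹ = σ ^ k)
    (hgen : Subgroup.closure {σ, τ} = ⊤) :
    Nonempty (Nmodel d e k hd hk ≃* G) := by
  haveI : NeZero e := ⟨he⟩
  haveI : NeZero d := ⟨hd⟩
  have hσe : σ ^ e = 1 := hσ ▸ pow_orderOf_eq_one σ
  have hτd : τ ^ d = 1 := hτ ▸ pow_orderOf_eq_one τ
  -- helper: powers indexed by ZMod values
  have sig_cast : ∀ (m : ℕ), σ ^ ((m : ZMod e)).val = σ ^ m := fun m => by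
    rw [ZMod.val_natCast, pow_mod_of_pow_eq_one hσe]
  have tau_cast : ∀ (m : ℕ), τ ^ ((m : ZMod d)).val = τ ^ m := fun m => by
    rw [ZMod.val_natCast, pow_mod_of_pow_eq_one hτd]
  -- the two monoid homs
  let fσ : Multiplicative (ZMod e) →* G :=
    { toFun := fun a => σ ^ (Multiplicative.toAdd a).val
      map_one' := by show σ ^ (0 : ZMod e).val = 1; rw [ZMod.val_zero, pow_zero]
      map_mul' := fun a b => by
        show σ ^ ((Multiplicative.toAdd a) + (Multiplicative.toAdd b)).val = _
        rw [ZMod.val_add, pow_mod_of_pow_eq_one hσe, pow_add] }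
  let fτ : Multiplicative (ZMod d) →* G :=
    { toFun := fun c => τ ^ (Multiplicative.toAdd c).val
      map_one' := by show τ ^ (0 : ZMod d).val = 1; rw [ZMod.val_zero, pow_zero]
      map_mul' := fun a b => by
        show τ ^ ((Multiplicative.toAdd a) + (Multiplicative.toAdd b)).val = _
        rw [ZMod.val_add, pow_mod_of_pow_eq_one hτd, pow_add] }
  have hcompat : ∀ c, fσ.comp ((φmap d e k hd hk) c).toMonoidHom =
      (MulAut.conj (fτ c)).toMonoidHom.comp fσ := by
    intro c
    refine MonoidHom.ext fun a => ?_
    show σ ^ (Multiplicative.toAdd ((φmap d e k hd hk) c a)).val =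
      τ ^ (Multiplicative.toAdd c).val * σ ^ (Multiplicative.toAdd a : ZMod e).val *
        (τ ^ (Multiplicative.toAdd c).val)⁻¹
    rw [conj_pow_lemma hrel, φmap_apply]
    have hcast : ((k ^ (Multiplicative.toAdd c).val * (Multiplicative.toAdd a : ZMod e).val : ℕ) : ZMod e) =
        (k : ZMod e) ^ (Multiplicative.toAdd c).val * Multiplicative.toAdd a := by
      push_cast [ZMod.natCast_zmod_val]
      rfl
    rw [← hcast, ZMod.val_natCast, pow_mod_of_pow_eq_one hσe]
  let Φ := SemidirectProduct.lift fσ fτ hcompat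
  have memσ : σ ∈ Φ.range := by
    refine ⟨SemidirectProduct.inl (Multiplicative.ofAdd (1 : ZMod e)), ?_⟩
    show Φ (SemidirectProduct.inl (Multiplicative.ofAdd (1 : ZMod e))) = σ
    rw [SemidirectProduct.lift_inl]
    show σ ^ ((1 : ZMod e)).val = σ
    have := sig_cast 1
    rwa [Nat.cast_one, pow_one] at this
  have memτ : τ ∈ Φ.range := by
    refine ⟨SemidirectProduct.inr (Multiplicative.ofAdd (1 : ZMod d)), ?_⟩
    show Φ (SemidirectProduct.inr (Multiplicative.ofAdd (1 : ZMod d))) = τ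
    rw [SemidirectProduct.lift_inr]
    show τ ^ ((1 : ZMod d)).val = τ
    have := tau_cast 1
    rwa [Nat.cast_one, pow_one] at this
  have hsurj : Function.Surjective Φ := by
    have h1 : Subgroup.closure ({σ, τ} : Set G) ≤ Φ.range := by
      rw [Subgroup.closure_le]
      rintro x (rfl | rfl)
      · exact memσ
      · exact memτ
    intro x
    obtain ⟨y, hy⟩ := h1 (hgen ▸ Subgroup.mem_top x)
    exact ⟨y, hy⟩
  haveI : Finite (Nmodel d e k hd hk) := Nmodel_finite d e k hd he hk
  haveI : Finite G := Finite.of_surjective Φ hsurj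
  have hcardG : Nat.card G = e * d := by
    have h1 : Nat.card G ≤ e * d := by
      calc Nat.card G ≤ Nat.card (Nmodel d e k hd hk) := Nat.card_le_card_of_surjective Φ hsurj
        _ = e * d := Nmodel_card d e k hd hk
    have h2 : e * d ∣ Nat.card G :=
      (Nat.Coprime.mul_dvd_of_dvd_of_dvd hcop.symm (hσ ▸ orderOf_dvd_natCard σ)
        (hτ ▸ orderOf_dvd_natCard τ))
    exact le_antisymm h1 (Nat.le_of_dvd Nat.card_pos h2)
  haveI : Fintype (Nmodel d e k hd hk) := Fintype.ofFinite _
  haveI : Fintype G := Fintype.ofFinite _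
  have hcards : Fintype.card (Nmodel d e k hd hk) = Fintype.card G := by
    rw [← Nat.card_eq_fintype_card, ← Nat.card_eq_fintype_card, hcardG, Nmodel_card]
  exact ⟨MulEquiv.ofBijective Φ ((Fintype.bijective_iff_surjective_and_card Φ).mpr
    ⟨hsurj, hcards⟩)⟩

end modelIso

section keymem
variable {G G' : Type*} [Group G] [Group G']

lemma key_mem {σ τ : G} {σ' τ' : G'} {k k' d e : ℕ}
    (hd : d ≠ 0) (he : e ≠ 0) (hcop : Nat.Coprime d e)
    (hσ : orderOf σ = e) (hτ : orderOf τ = d) (hrel : τ * σ * τ⁻¹ = σ ^ k)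
    (hσ' : orderOf σ' = e) (hτ' : orderOf τ' = d) (hrel' : τ' * σ' * τ'⁻¹ = σ' ^ k')
    (hgen' : Subgroup.closure {σ', τ'} = ⊤)
    (f : G ≃* G') : (k : ZMod e) ∈ Submonoid.powers (k' : ZMod e) := by
  haveI : NeZero e := ⟨he⟩
  have hσe : σ ^ e = 1 := hσ ▸ pow_orderOf_eq_one σ
  have hfσ_pow : (f σ) ^ e = 1 := by rw [← map_pow, hσe, map_one]
  have hcop_e : Nat.Coprime d e := hcop
  obtain ⟨m, hm'⟩ := mem_powers_of_pow_eq_one hd he hcop hσ' hτ' hrel' hgen' hcop_e hfσ_pow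
  have hm : σ' ^ m = f σ := hm'
  have hord_fσ : orderOf (f σ) = e := by
    have := orderOf_injective f.toMonoidHom f.injective σ
    simp only [MulEquiv.coe_toMonoidHom] at this
    rw [this, hσ]
  have hcm : Nat.Coprime e m := by
    rcases Nat.eq_zero_or_pos m with hm0 | hm0
    · have h1 : orderOf (σ' ^ m) = e := by rw [hm, hord_fσ]
      rw [hm0, pow_zero, orderOf_one] at h1
      rw [← h1]
      exact Nat.coprime_one_left m
    · have h1 : orderOf (σ' ^ m) = e := by rw [hm, hord_fσ]
      rw [orderOf_pow' _ (Nat.pos_iff_ne_zero.mp hm0), hσ'] at h1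
      rcases Nat.div_eq_self.mp h1 with h | h
      · exact absurd h he
      · exact h
  obtain ⟨b, c, hb⟩ := normal_form hd he hσ' hτ' hrel' hgen' (f τ)
  have hL : f τ * f σ * (f τ)⁻¹ = σ' ^ (k' ^ c * m) := by
    rw [hb, ← hm]
    calc σ' ^ b * τ' ^ c * (σ' ^ m) * (σ' ^ b * τ' ^ c)⁻¹
        = σ' ^ b * (τ' ^ c * σ' ^ m * (τ' ^ c)⁻¹) * (σ' ^ b)⁻¹ := by group
      _ = σ' ^ b * σ' ^ (k' ^ c * m) * (σ' ^ b)⁻¹ := by rw [conj_pow_lemma hrel']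
      _ = σ' ^ (k' ^ c * m) := by
          rw [pow_mul_comm, mul_assoc, mul_inv_cancel, mul_one]
  have hR : f τ * f σ * (f τ)⁻¹ = σ' ^ (m * k) := by
    rw [← map_inv, ← map_mul, ← map_mul, hrel, map_pow, ← hm, ← pow_mul]
  have hMod : k' ^ c * m ≡ m * k [MOD e] := by
    have := hL.symm.trans hR
    rw [← hσ'] at *
    exact pow_eq_pow_iff_modEq.mp this
  have hZ : ((k' : ZMod e)) ^ c * (m : ZMod e) = (m : ZMod e) * (k : ZMod e) := by
    have := (ZMod.natCast_eq_natCast_iff _ _ _).mpr hMod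
    push_cast at this
    exact this
  have hum : IsUnit (m : ZMod e) := (ZMod.isUnit_iff_coprime m e).mpr hcm.symm
  have : (k' : ZMod e) ^ c = (k : ZMod e) := by
    apply hum.mul_left_cancel
    rw [← hZ, mul_comm]
  exact ⟨c, this⟩

end keymem

/-- **Lemma (isomorphism criterion for groups of squarefree order).** Let
`n = d·e = d'·e'` be squarefree, with `gcd(d,e) = gcd(d',e') = 1`, `k` of order `d`
mod `e` and `k'` of order `d'` mod `e'`. Then `G(d,e,k) ≅ G(d',e',k')` if and only if
`d = d'`, `e = e'` and `k`, `k'` generate the same cyclic subgroup of `U(e)`.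
Here `G` (resp. `G'`) is a group realising `G(d,e,k)` (resp. `G(d',e',k')`) via generators
`σ, τ` (resp. `σ', τ'`) satisfying the defining presentation. -/
theorem Gdek_iso_iff (n d e k d' e' k' : ℕ) (hn : Squarefree n)
    (hde : n = d * e) (hde' : n = d' * e')
    (hcop : Nat.Coprime d e) (hcop' : Nat.Coprime d' e')
    (hord : orderOf (k : ZMod e) = d) (hord' : orderOf (k' : ZMod e') = d')
    (G G' : Type) [Group G] [Group G']
    (σ τ : G) (hσ : orderOf σ = e) (hτ : orderOf τ = d)
    (hrel : τ * σ * τ⁻¹ = σ ^ k) (hgen : Subgroup.closure {σ, τ} = ⊤)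
    (σ' τ' : G') (hσ' : orderOf σ' = e') (hτ' : orderOf τ' = d')
    (hrel' : τ' * σ' * τ'⁻¹ = σ' ^ k') (hgen' : Subgroup.closure {σ', τ'} = ⊤) :
    Nonempty (G ≃* G') ↔
      d = d' ∧ e = e' ∧
        Submonoid.powers ((k : ZMod e)) = Submonoid.powers ((k' : ZMod e)) := by
  have hn0 : n ≠ 0 := hn.ne_zero
  have hd0 : d ≠ 0 := fun h => hn0 (by rw [hde, h, Nat.zero_mul])
  have he0 : e ≠ 0 := fun h => hn0 (by rw [hde, h, Nat.mul_zero])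
  have hd'0 : d' ≠ 0 := fun h => hn0 (by rw [hde', h, Nat.zero_mul])
  have he'0 : e' ≠ 0 := fun h => hn0 (by rw [hde', h, Nat.mul_zero])
  constructor
  · rintro ⟨f⟩
    have hcard : ∀ p : ℕ, Nat.card {x : G // x ^ p = 1} = Nat.card {y : G' // y ^ p = 1} := by
      intro p
      refine Nat.card_congr (Equiv.subtypeEquiv f.toEquiv fun x => ?_)
      show x ^ p = 1 ↔ (f x) ^ p = 1
      rw [← map_pow]
      exact (EmbeddingLike.map_eq_one_iff).symm
    have hdvds : ∀ p : ℕ, p.Prime → (p ∣ e ↔ p ∣ e') := by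
      intro p hp
      constructor
      · intro hpe
        by_contra hpe'
        have hpd' : p ∣ d' := by
          have hpn : p ∣ n := by rw [hde]; exact Dvd.dvd.mul_left hpe d
          rcases (Nat.Prime.dvd_mul hp).mp (hde' ▸ hpn) with h | h
          exacts [h, absurd h hpe']
        have h1 := card_roots_le hd0 he0 hcop hσ hτ hrel hgen hp hpe
        have h2 := card_roots_ge hd'0 he'0 hcop' hσ' hτ' hrel' hgen' hord' hp hpd'
        rw [hcard p] at h1
        omega
      · intro hpe'
        by_contra hpe
        have hpd : p ∣ d := by
          have hpn : p ∣ n := by rw [hde']; exact Dvd.dvd.mul_left hpe' d'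
          rcases (Nat.Prime.dvd_mul hp).mp (hde ▸ hpn) with h | h
          exacts [h, absurd h hpe]
        have h1 := card_roots_le hd'0 he'0 hcop' hσ' hτ' hrel' hgen' hp hpe'
        have h2 := card_roots_ge hd0 he0 hcop hσ hτ hrel hgen hord hp hpd
        rw [hcard p] at h2
        omega
    have he_eq : e = e' := by
      have h1 : Squarefree e := hn.squarefree_of_dvd ⟨d, by rw [hde]; ring⟩
      have h2 : Squarefree e' := hn.squarefree_of_dvd ⟨d', by rw [hde']; ring⟩
      have h3 : e.primeFactors = e'.primeFactors := by
        ext p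
        simp only [Nat.mem_primeFactors]
        constructor
        · rintro ⟨hp, hpe, -⟩
          exact ⟨hp, (hdvds p hp).mp hpe, he'0⟩
        · rintro ⟨hp, hpe, -⟩
          exact ⟨hp, (hdvds p hp).mpr hpe, he0⟩
      calc e = ∏ p ∈ e.primeFactors, p := (Nat.prod_primeFactors_of_squarefree h1).symm
        _ = ∏ p ∈ e'.primeFactors, p := by rw [h3]
        _ = e' := Nat.prod_primeFactors_of_squarefree h2
    have hd_eq : d = d' := by
      apply Nat.eq_of_mul_eq_mul_right (Nat.pos_of_ne_zero he0)
      rw [← hde]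
      rw [hde', he_eq]
    subst he_eq
    subst hd_eq
    refine ⟨rfl, rfl, ?_⟩
    have m1 := key_mem hd0 he0 hcop hσ hτ hrel hσ' hτ' hrel' hgen' f
    have m2 := key_mem hd0 he0 hcop hσ' hτ' hrel' hσ hτ hrel hgen f.symm
    exact le_antisymm (Submonoid.powers_le.mpr m1) (Submonoid.powers_le.mpr m2)
  · rintro ⟨hd_eq, he_eq, hpow⟩
    subst he_eq
    subst hd_eq
    have hτ'd : τ' ^ d = 1 := hτ' ▸ pow_orderOf_eq_one τ'
    have hk : (k : ZMod e) ^ d = 1 := hord ▸ pow_orderOf_eq_one _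
    have hkm : (k : ZMod e) ∈ Submonoid.powers ((k' : ZMod e)) :=
      hpow ▸ Submonoid.mem_powers _
    obtain ⟨b, hb''⟩ := hkm
    have hb : (k' : ZMod e) ^ b = (k : ZMod e) := hb''
    have hd1_of_b0 : b = 0 → d = 1 := by
      intro hb0
      rw [hb0, pow_zero] at hb
      rw [← hord, ← hb, orderOf_one]
    have hgcd : Nat.Coprime d b := by
      by_cases hb0 : b = 0
      · rw [hd1_of_b0 hb0]
        exact Nat.coprime_one_left b
      · have h1 : orderOf ((k' : ZMod e) ^ b) = d := by rw [hb, hord]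
        rw [orderOf_pow' _ hb0, hord'] at h1
        rcases Nat.div_eq_self.mp h1 with h | h
        · exact absurd h hd0
        · exact h
    have hτ2 : orderOf (τ' ^ b) = d := by
      by_cases hb0 : b = 0
      · rw [hb0, pow_zero, orderOf_one, hd1_of_b0 hb0]
      · rw [orderOf_pow' _ hb0, hτ']
        rw [Nat.Coprime] at hgcd
        rw [hgcd, Nat.div_one]
    have hrel2 : (τ' ^ b) * σ' * (τ' ^ b)⁻¹ = σ' ^ k := by
      have h1 := conj_pow_lemma hrel' b 1
      rw [pow_one, Nat.mul_one] at h1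
      rw [h1]
      have h2 : (k' ^ b : ℕ) ≡ k [MOD e] := by
        rw [← ZMod.natCast_eq_natCast_iff]
        push_cast
        rw [hb]
      exact pow_eq_pow_iff_modEq.mpr (hσ'.symm ▸ h2)
    have hgen2 : Subgroup.closure ({σ', τ' ^ b} : Set G') = ⊤ := by
      have hmemσ : σ' ∈ Subgroup.closure ({σ', τ' ^ b} : Set G') :=
        Subgroup.subset_closure (Set.mem_insert _ _)
      have hmemτ : τ' ∈ Subgroup.closure ({σ', τ' ^ b} : Set G') := by
        by_cases hd1 : d = 1
        · have : τ' = 1 := orderOf_eq_one_iff.mp (hτ'.trans hd1)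
          rw [this]
          exact Subgroup.one_mem _
        · have hdd : 1 < d := by omega
          obtain ⟨b', -, hb'⟩ := Nat.exists_mul_mod_eq_one_of_coprime hgcd.symm hdd
          have : (τ' ^ b) ^ b' = τ' := by
            rw [← pow_mul, ← pow_mod_of_pow_eq_one hτ'd, hb', pow_one]
          have hm : τ' ^ b ∈ Subgroup.closure ({σ', τ' ^ b} : Set G') :=
            Subgroup.subset_closure (Set.mem_insert_of_mem _ rfl)
          have hfin := Subgroup.pow_mem _ hm b'
          rwa [this] at hfin
      rw [eq_top_iff, ← hgen', Subgroup.closure_le]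
      rintro x (rfl | rfl)
      · exact hmemσ
      · exact hmemτ
    obtain ⟨iso1⟩ := model_iso hd0 he0 hcop hk hσ hτ hrel hgen
    obtain ⟨iso2⟩ := model_iso hd0 he0 hcop hk hσ' hτ2 hrel2 hgen2
    exact ⟨iso1.symm.trans iso2⟩
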